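/- It holds that T^C = S₀^C ∩ (⋂_{k∈N₂} S_k^C), and consequently P^B ∖ T^C = (P^B ∖ S₀^C) ∪ (⋃_{k∈N₂} (P^B ∖ S_k^C)). -/

import Mathlib

open Set Pointwise

noncomputable section

variable {n : ℕ} {ι : Type*} [Fintype ι]

/-- Recession cone of a set `A`. -/
def recc (A : Set (Fin n → ℝ)) : Set (Fin n → ℝ) :=
  {d | ∀ a ∈ A, ∀ t : ℝ, 0 ≤ t → a + t • d ∈ A}

/-- The translated simplicial cone `P^B = {x̄ + Σ_j x_j r^j : x_j ≥ 0}`. -/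
def PBset (xb : Fin n → ℝ) (r : ι → Fin n → ℝ) : Set (Fin n → ℝ) :=
  {x | ∃ c : ι → ℝ, (∀ j, 0 ≤ c j) ∧ x = xb + ∑ j, c j • r j}

/-- The recession cone of `P^B`, i.e. `{Σ_j t_j r^j : t_j ≥ 0}`. -/
def reccPBset (r : ι → Fin n → ℝ) : Set (Fin n → ℝ) :=
  {x | ∃ t : ι → ℝ, (∀ j, 0 ≤ t j) ∧ x = ∑ j, t j • r j}

/-- `λ⁻ = inf {λ ≥ 0 : x̄ + λ d ∈ C}` (`+∞` if the halfline misses `C`). -/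
noncomputable def lamM (xb d : Fin n → ℝ) (C : Set (Fin n → ℝ)) : EReal :=
  sInf ((fun l : ℝ => (l : EReal)) '' {l : ℝ | 0 ≤ l ∧ xb + l • d ∈ C})

/-- `λ⁺ = sup {λ ≥ 0 : x̄ + λ d ∈ C}` (`−∞` if the halfline misses `C`). -/
noncomputable def lamP (xb d : Fin n → ℝ) (C : Set (Fin n → ℝ)) : EReal :=
  sSup ((fun l : ℝ => (l : EReal)) '' {l : ℝ | 0 ≤ l ∧ xb + l • d ∈ C})

/-- `N₀`: indices whose halfline misses `C`. -/
def N0set (xb : Fin n → ℝ) (r : ι → Fin n → ℝ) (C : Set (Fin n → ℝ)) : Set ι :=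
  {j | ∀ l : ℝ, 0 ≤ l → xb + l • r j ∉ C}

/-- `N₁`: indices with `0 < λ⁻ < +∞` and `λ⁺ = +∞`. -/
def N1set (xb : Fin n → ℝ) (r : ι → Fin n → ℝ) (C : Set (Fin n → ℝ)) : Set ι :=
  {j | 0 < lamM xb (r j) C ∧ lamM xb (r j) C < ⊤ ∧ lamP xb (r j) C = ⊤}

/-- `N₂`: indices with `0 < λ⁻ < +∞` and `λ⁻ < λ⁺ < +∞`. -/
def N2set (xb : Fin n → ℝ) (r : ι → Fin n → ℝ) (C : Set (Fin n → ℝ)) : Set ι :=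
  {j | 0 < lamM xb (r j) C ∧ lamM xb (r j) C < ⊤ ∧
    lamM xb (r j) C < lamP xb (r j) C ∧ lamP xb (r j) C < ⊤}

/-- `T = {x̄} + conv(⋃_{j∈N₁∪N₂} {λ r^j : λ⁻_j < λ < λ⁺_j})`. -/
def Tset (xb : Fin n → ℝ) (r : ι → Fin n → ℝ) (C : Set (Fin n → ℝ)) : Set (Fin n → ℝ) :=
  {xb} + convexHull ℝ (⋃ j ∈ N1set xb r C ∪ N2set xb r C,
    {y : Fin n → ℝ | ∃ l : ℝ, lamM xb (r j) C < (l : EReal) ∧ (l : EReal) < lamP xb (r j) C ∧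
      y = l • r j})

/-- `T^C = T + recc(C)`. -/
def TCset (xb : Fin n → ℝ) (r : ι → Fin n → ℝ) (C : Set (Fin n → ℝ)) : Set (Fin n → ℝ) :=
  Tset xb r C + recc C

/-- `R = {x̄} + conv(⋃_{j∈N₁} {λ r^j : λ > λ⁻_j})`. -/
def Rset (xb : Fin n → ℝ) (r : ι → Fin n → ℝ) (C : Set (Fin n → ℝ)) : Set (Fin n → ℝ) :=
  {xb} + convexHull ℝ (⋃ j ∈ N1set xb r C,
    {y : Fin n → ℝ | ∃ l : ℝ, lamM xb (r j) C < (l : EReal) ∧ y = l • r j})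

/-- `R^C = R + recc(C)`. -/
def RCset (xb : Fin n → ℝ) (r : ι → Fin n → ℝ) (C : Set (Fin n → ℝ)) : Set (Fin n → ℝ) :=
  Rset xb r C + recc C

/-- `S_k^C = {x̄} + conv(⋃_{j∈N₂} {λ r^j : 0 ≤ λ < λ⁺_j}) + {λ r^k : λ ≤ 0} + recc(C)`. -/
def SkCset (xb : Fin n → ℝ) (r : ι → Fin n → ℝ) (C : Set (Fin n → ℝ)) (k : ι) :
    Set (Fin n → ℝ) :=
  {xb} + convexHull ℝ (⋃ j ∈ N2set xb r C,
      {y : Fin n → ℝ | ∃ l : ℝ, 0 ≤ l ∧ (l : EReal) < lamP xb (r j) C ∧ y = l • r j})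
    + {y : Fin n → ℝ | ∃ l : ℝ, l ≤ 0 ∧ y = l • r k}
    + recc C

/-- `S₀^C = {x̄} + conv(⋃_{j∈N₁∪N₂} {λ r^j : λ > λ⁻_j}) + recc(C)`. -/
def S0Cset (xb : Fin n → ℝ) (r : ι → Fin n → ℝ) (C : Set (Fin n → ℝ)) :
    Set (Fin n → ℝ) :=
  {xb} + convexHull ℝ (⋃ j ∈ N1set xb r C ∪ N2set xb r C,
      {y : Fin n → ℝ | ∃ l : ℝ, lamM xb (r j) C < (l : EReal) ∧ y = l • r j})
    + recc C


/-! ### Auxiliary lemmas -/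

section Aux
set_option linter.unusedSectionVars false

lemma recc_zero_mem (C : Set (Fin n → ℝ)) : (0 : Fin n → ℝ) ∈ recc C := by
  intro a ha t _; simpa using ha

lemma recc_smul_mem {C : Set (Fin n → ℝ)} {d : Fin n → ℝ} (hd : d ∈ recc C)
    {s : ℝ} (hs : 0 ≤ s) : s • d ∈ recc C := by
  intro a ha t ht
  have := hd a ha (t * s) (mul_nonneg ht hs)
  simpa [smul_smul] using this

lemma recc_add_mem {C : Set (Fin n → ℝ)} {d e : Fin n → ℝ} (hd : d ∈ recc C)
    (he : e ∈ recc C) : d + e ∈ recc C := by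
  intro a ha t ht
  have h2 := he _ (hd a ha t ht) t ht
  simpa [smul_add, add_assoc] using h2

lemma recc_convex (C : Set (Fin n → ℝ)) : Convex ℝ (recc C) := by
  intro d hd e he s t hs ht _
  exact recc_add_mem (recc_smul_mem hd hs) (recc_smul_mem he ht)

lemma mem_of_combo_closure {C : Set (Fin n → ℝ)} (hCopen : IsOpen C) (hCconv : Convex ℝ C)
    {a x : Fin n → ℝ} {t : ℝ} (ha : a ∈ C) (h : a + (2*t) • x ∈ closure C) :
    a + t • x ∈ C := by
  have ha' : a ∈ interior C := by rwa [hCopen.interior_eq]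
  have h2 := hCconv.combo_interior_closure_mem_interior ha' h
    (by norm_num : (0:ℝ) < 1/2) (by norm_num : (0:ℝ) ≤ 1/2) (by norm_num)
  rw [hCopen.interior_eq] at h2
  have : (1/2 : ℝ) • a + (1/2 : ℝ) • (a + (2*t) • x) = a + t • x := by module
  rwa [this] at h2

lemma recc_isClosed {C : Set (Fin n → ℝ)} (hCopen : IsOpen C) (hCconv : Convex ℝ C) :
    IsClosed (recc C) := by
  have h : recc C = ⋂ (a : Fin n → ℝ) (_ : a ∈ C) (t : ℝ) (_ : 0 ≤ t),
      {d | a + t • d ∈ closure C} := by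
    ext d
    simp only [Set.mem_iInter, Set.mem_setOf_eq]
    constructor
    · intro hd a ha t ht; exact subset_closure (hd a ha t ht)
    · intro hd a ha t ht
      exact mem_of_combo_closure hCopen hCconv ha (hd a ha (2*t) (by linarith))
  rw [h]
  refine isClosed_iInter fun a => isClosed_iInter fun ha => isClosed_iInter fun t =>
    isClosed_iInter fun ht => ?_
  have : {d : Fin n → ℝ | a + t • d ∈ closure C} = (fun d => a + t • d) ⁻¹' closure C := rfl
  rw [this]
  exact isClosed_closure.preimage (continuous_const.add (continuous_id.const_smul t))

lemma lamM_nonneg (xb d : Fin n → ℝ) (C : Set (Fin n → ℝ)) : 0 ≤ lamM xb d C := by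
  refine le_sInf ?_
  rintro e ⟨l, ⟨hl0, _⟩, rfl⟩
  show (0:EReal) ≤ (l:EReal)
  exact_mod_cast hl0

lemma exists_real_of_lam {e : EReal} (h0 : 0 < e) (ht : e < ⊤) :
    ∃ a : ℝ, 0 < a ∧ (a : EReal) = e := by
  refine ⟨e.toReal, ?_, EReal.coe_toReal ht.ne (by
    intro h; rw [h] at h0; exact absurd h0 (by simp))⟩
  have hc : ((e.toReal : ℝ) : EReal) = e := EReal.coe_toReal ht.ne (by
    intro h; rw [h] at h0; exact absurd h0 (by simp))
  have : ((0:ℝ) : EReal) < (e.toReal : EReal) := by rw [hc]; exact_mod_cast h0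
  exact_mod_cast this

/-- For `j ∈ N1`, the direction `r j` is a recession direction of `C`. -/
lemma N1_mem_recc {xb : Fin n → ℝ} {r : ι → Fin n → ℝ} {C : Set (Fin n → ℝ)}
    (hCopen : IsOpen C) (hCconv : Convex ℝ C) {j : ι} (hj : j ∈ N1set xb r C) :
    r j ∈ recc C := by
  obtain ⟨-, -, hsup⟩ := hj
  have hbig : ∀ M : ℝ, ∃ l : ℝ, 0 ≤ l ∧ xb + l • r j ∈ C ∧ M < l := by
    intro M
    have := (sSup_eq_top.mp hsup) (M : EReal) (by exact lt_top_iff_ne_top.mpr (by simp))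
    obtain ⟨e, ⟨l, ⟨hl0, hlC⟩, rfl⟩, hMl⟩ := this
    have : (M:EReal) < (l:EReal) := hMl
    exact ⟨l, hl0, hlC, by exact_mod_cast this⟩
  have hcl : ∀ t : ℝ, 0 ≤ t → ∀ b ∈ C, b + t • r j ∈ closure C := by
    intro t ht b hb
    rcases eq_or_lt_of_le ht with rfl | htpos
    · simpa using subset_closure hb
    rw [Metric.mem_closure_iff]
    intro ε hε
    obtain ⟨l, hl0, hlC, hlgt⟩ := hbig (max t (t * dist xb b / ε))
    have hlt : t < l := lt_of_le_of_lt (le_max_left _ _) hlgt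
    have hlpos : 0 < l := lt_of_le_of_lt ht hlt
    set θ : ℝ := t / l with hθ
    have hθ0 : 0 < θ := div_pos htpos hlpos
    have hθ1 : θ < 1 := (div_lt_one hlpos).mpr hlt
    refine ⟨(1-θ) • b + θ • (xb + l • r j), hCconv hb hlC (by linarith) hθ0.le (by ring), ?_⟩
    have heq : (1-θ) • b + θ • (xb + l • r j) = (b + t • r j) + θ • (xb - b) := by
      have : θ * l = t := div_mul_cancel₀ t hlpos.ne'
      rw [smul_add, smul_smul, this]
      module
    rw [heq, dist_eq_norm]
    have : b + t • r j - (b + t • r j + θ • (xb - b)) = -(θ • (xb - b)) := by abel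
    rw [this, norm_neg, norm_smul, Real.norm_eq_abs, abs_of_pos hθ0]
    have hnd : ‖xb - b‖ = dist xb b := (dist_eq_norm xb b).symm
    rw [hnd]
    rcases eq_or_lt_of_le (dist_nonneg : 0 ≤ dist xb b) with hd0 | hdpos
    · rw [← hd0, mul_zero]; exact hε
    · have h2 : t * dist xb b / ε < l := lt_of_le_of_lt (le_max_right _ _) hlgt
      rw [div_lt_iff₀ hε] at h2
      rw [hθ, div_mul_eq_mul_div, div_lt_iff₀ hlpos]
      nlinarith
  intro b hb t ht
  have ha' : b ∈ interior C := by rwa [hCopen.interior_eq]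
  have h2 := hCconv.combo_interior_closure_mem_interior ha' (hcl (2*t) (by linarith) b hb)
    (by norm_num : (0:ℝ) < 1/2) (by norm_num : (0:ℝ) ≤ 1/2) (by norm_num)
  rw [hCopen.interior_eq] at h2
  have : (1/2 : ℝ) • b + (1/2 : ℝ) • (b + (2*t) • r j) = b + t • r j := by module
  rwa [this] at h2

/-- If the halfline along `r k` meets `C` and `λ⁺` is finite then `k ∈ N₂`. -/
lemma mem_N2_of {xb : Fin n → ℝ} {r : ι → Fin n → ℝ} {C : Set (Fin n → ℝ)}
    (hCopen : IsOpen C) (hxb : xb ∉ closure C)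
    {k : ι} (hk : ∃ l : ℝ, 0 ≤ l ∧ xb + l • r k ∈ C)
    (htop : lamP xb (r k) C ≠ ⊤) : k ∈ N2set xb r C := by
  set L : Set ℝ := {l : ℝ | 0 ≤ l ∧ xb + l • r k ∈ C} with hL
  have hLpos : ∀ l ∈ L, 0 < l := by
    intro l ⟨hl0, hlC⟩
    rcases eq_or_lt_of_le hl0 with rfl | h
    · exact absurd (subset_closure (by simpa using hlC)) hxb
    · exact h
  have hsmaller : ∀ l ∈ L, ∃ l' ∈ L, l' < l := by
    intro l hl
    obtain ⟨ε, hε, hball⟩ := Metric.isOpen_iff.mp hCopen _ hl.2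
    have hlpos := hLpos l hl
    set δ : ℝ := min (l/2) (ε / (2 * (‖r k‖ + 1))) with hδ
    have hnorm : 0 < ‖r k‖ + 1 := by positivity
    have hδpos : 0 < δ := lt_min (by linarith) (by positivity)
    refine ⟨l - δ, ⟨by
      have : δ ≤ l/2 := min_le_left _ _
      linarith, hball ?_⟩, by linarith⟩
    rw [Metric.mem_ball, dist_eq_norm]
    have : xb + (l - δ) • r k - (xb + l • r k) = (-δ) • r k := by
      rw [sub_smul]; module
    rw [this, norm_smul, Real.norm_eq_abs]
    have habs : |(-δ)| = δ := by rw [abs_neg, abs_of_pos hδpos]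
    rw [habs]
    have hδ2 : δ ≤ ε / (2 * (‖r k‖ + 1)) := min_le_right _ _
    have : δ * ‖r k‖ ≤ ε / (2 * (‖r k‖ + 1)) * (‖r k‖ + 1) :=
      mul_le_mul hδ2 (by linarith [norm_nonneg (r k)]) (norm_nonneg _) (by positivity)
    have h2 : ε / (2 * (‖r k‖ + 1)) * (‖r k‖ + 1) = ε / 2 := by
      field_simp
    rw [h2] at this
    linarith
  obtain ⟨l0, hl0⟩ := hk
  have hl0L : l0 ∈ L := hl0
  have hMle : ∀ l ∈ L, lamM xb (r k) C ≤ (l : EReal) := fun l hl => sInf_le ⟨l, hl, rfl⟩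
  have hMtop : lamM xb (r k) C < ⊤ := lt_of_le_of_lt (hMle l0 hl0L) (by simp)
  have hM0 : 0 < lamM xb (r k) C := by
    by_contra h
    push_neg at h
    have hM0' : lamM xb (r k) C = 0 := le_antisymm h (by
      refine le_sInf ?_
      rintro e ⟨l, hl, rfl⟩
      show (0:EReal) ≤ (l:EReal)
      exact_mod_cast hl.1)
    apply hxb
    rw [Metric.mem_closure_iff]
    intro ε hε
    have hnorm : 0 < ‖r k‖ + 1 := by positivity
    have : lamM xb (r k) C < ((ε / (‖r k‖ + 1) : ℝ) : EReal) := by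
      rw [hM0']
      exact_mod_cast (by positivity : (0:ℝ) < ε / (‖r k‖ + 1))
    obtain ⟨e, ⟨l, hl, rfl⟩, hlt⟩ := sInf_lt_iff.mp this
    have hlt2 : ((l:ℝ):EReal) < ((ε / (‖r k‖ + 1) : ℝ) : EReal) := hlt
    have hlt' : l < ε / (‖r k‖ + 1) := by exact_mod_cast hlt2
    refine ⟨xb + l • r k, hl.2, ?_⟩
    rw [dist_eq_norm]
    have : xb - (xb + l • r k) = (-l) • r k := by module
    rw [this, norm_smul, Real.norm_eq_abs, abs_neg, abs_of_nonneg hl.1]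
    have h1 : l * ‖r k‖ ≤ l * (‖r k‖ + 1) := by nlinarith [hl.1, norm_nonneg (r k)]
    have h2 : l * (‖r k‖ + 1) < ε := (lt_div_iff₀ hnorm).mp hlt'
    linarith
  have hMP : lamM xb (r k) C < lamP xb (r k) C := by
    obtain ⟨l', hl'L, hl'lt⟩ := hsmaller l0 hl0L
    calc lamM xb (r k) C ≤ (l' : EReal) := hMle l' hl'L
    _ < (l0 : EReal) := by exact_mod_cast hl'lt
    _ ≤ lamP xb (r k) C := le_sSup ⟨l0, hl0L, rfl⟩
  exact ⟨hM0, hMtop, hMP, lt_top_iff_ne_top.mpr htop⟩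

end Aux


section Aux2
set_option linter.unusedSectionVars false
open Finset

lemma one_lt_combo {s t A B : ℝ} (hs : 0 ≤ s) (ht : 0 ≤ t) (hst : s + t = 1)
    (hA : 1 < A) (hB : 1 < B) : 1 < s * A + t * B := by
  rcases eq_or_lt_of_le hs with h | h
  · have hts : t = 1 := by linarith
    rw [← h, hts]; nlinarith
  · nlinarith [mul_lt_mul_of_pos_left hA h, mul_le_mul_of_nonneg_left hB.le ht]

lemma combo_lt_one {s t A B : ℝ} (hs : 0 ≤ s) (ht : 0 ≤ t) (hst : s + t = 1)
    (hA : A < 1) (hB : B < 1) : s * A + t * B < 1 := by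
  rcases eq_or_lt_of_le hs with h | h
  · have hts : t = 1 := by linarith
    rw [← h, hts]; nlinarith
  · nlinarith [mul_lt_mul_of_pos_left hA h, mul_le_mul_of_nonneg_left hB.le ht]

lemma sum_smul_inj {r : ι → Fin n → ℝ} (hr : LinearIndependent ℝ r) {c c' : ι → ℝ}
    (h : (∑ j, c j • r j) = ∑ j, c' j • r j) : c = c' := by
  have h2 : ∑ j, (c j - c' j) • r j = 0 := by
    simp only [sub_smul, Finset.sum_sub_distrib, h, sub_self]
  have h3 := Fintype.linearIndependent_iff.mp hr (fun j => c j - c' j) h2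
  funext j
  exact sub_eq_zero.mp (h3 j)

lemma smul_combo_sum (r : ι → Fin n → ℝ) (c c' : ι → ℝ) (s t : ℝ) :
    s • (∑ j, c j • r j) + t • (∑ j, c' j • r j) = ∑ j, (s * c j + t * c' j) • r j := by
  rw [Finset.smul_sum, Finset.smul_sum, ← Finset.sum_add_distrib]
  refine Finset.sum_congr rfl fun j _ => ?_
  rw [add_smul, smul_smul, smul_smul]

lemma div_combo_sum (w c c' : ι → ℝ) (s t : ℝ) :
    ∑ j : ι, (s * c j + t * c' j) / w j
      = s * ∑ j : ι, c j / w j + t * ∑ j : ι, c' j / w j := by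
  rw [Finset.mul_sum, Finset.mul_sum, ← Finset.sum_add_distrib]
  exact Finset.sum_congr rfl fun j _ => by ring

lemma hull0_subset (xb : Fin n → ℝ) (r : ι → Fin n → ℝ) (C : Set (Fin n → ℝ)) :
    convexHull ℝ (⋃ j ∈ N1set xb r C ∪ N2set xb r C,
      {y : Fin n → ℝ | ∃ l : ℝ, lamM xb (r j) C < (l : EReal) ∧ y = l • r j}) ⊆
    {y | ∃ c : ι → ℝ, (∀ j, 0 ≤ c j) ∧ (∀ j, j ∉ N1set xb r C ∪ N2set xb r C → c j = 0) ∧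
      1 < (∑ j, c j / (lamM xb (r j) C).toReal) ∧ y = ∑ j, c j • r j} := by
  classical
  apply convexHull_min
  · rintro y hy
    rw [Set.mem_iUnion₂] at hy
    obtain ⟨j, hj, l, hl, rfl⟩ := hy
    have hfin : 0 < lamM xb (r j) C ∧ lamM xb (r j) C < ⊤ := by
      rcases hj with h | h
      exacts [⟨h.1, h.2.1⟩, ⟨h.1, h.2.1⟩]
    obtain ⟨a, ha0, hae⟩ := exists_real_of_lam hfin.1 hfin.2
    have haa : (lamM xb (r j) C).toReal = a := by rw [← hae]; simp
    have hal : a < l := by rw [← hae] at hl; exact_mod_cast hl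
    refine ⟨fun i => if i = j then l else 0, ?_, ?_, ?_, ?_⟩
    · intro i; by_cases h : i = j <;> simp [h]; linarith
    · intro i hi
      simp [show i ≠ j from fun hij => hi (hij ▸ hj)]
    · rw [Finset.sum_eq_single j (fun i _ hij => by simp [hij])
        (fun h => absurd (Finset.mem_univ j) h)]
      simp only [if_pos rfl]
      rw [haa]
      exact (one_lt_div ha0).mpr hal
    · rw [Finset.sum_eq_single j (fun i _ hij => by simp [hij])
        (fun h => absurd (Finset.mem_univ j) h)]
      simp
  · rintro y1 ⟨c1, h10, h1s, h1H, rfl⟩ y2 ⟨c2, h20, h2s, h2H, rfl⟩ s t hs ht hst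
    refine ⟨fun j => s * c1 j + t * c2 j, ?_, ?_, ?_, (smul_combo_sum r c1 c2 s t)⟩
    · intro j; have := h10 j; have := h20 j; positivity
    · intro j hj; simp only [h1s j hj, h2s j hj]; ring
    · rw [div_combo_sum]
      exact one_lt_combo hs ht hst h1H h2H

lemma hullk_subset (xb : Fin n → ℝ) (r : ι → Fin n → ℝ) (C : Set (Fin n → ℝ)) :
    convexHull ℝ (⋃ j ∈ N2set xb r C,
      {y : Fin n → ℝ | ∃ l : ℝ, 0 ≤ l ∧ (l : EReal) < lamP xb (r j) C ∧ y = l • r j}) ⊆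
    {y | ∃ c : ι → ℝ, (∀ j, 0 ≤ c j) ∧ (∀ j, j ∉ N2set xb r C → c j = 0) ∧
      (∑ j, c j / (lamP xb (r j) C).toReal) < 1 ∧ y = ∑ j, c j • r j} := by
  classical
  apply convexHull_min
  · rintro y hy
    rw [Set.mem_iUnion₂] at hy
    obtain ⟨j, hj, l, hl0, hl, rfl⟩ := hy
    obtain ⟨q, hq0, hqe⟩ := exists_real_of_lam (lt_trans hj.1 hj.2.2.1) hj.2.2.2
    have hqq : (lamP xb (r j) C).toReal = q := by rw [← hqe]; simp
    have hlq : l < q := by rw [← hqe] at hl; exact_mod_cast hl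
    refine ⟨fun i => if i = j then l else 0, ?_, ?_, ?_, ?_⟩
    · intro i; by_cases h : i = j <;> simp [h]; linarith
    · intro i hi
      simp [show i ≠ j from fun hij => hi (hij ▸ hj)]
    · rw [Finset.sum_eq_single j (fun i _ hij => by simp [hij])
        (fun h => absurd (Finset.mem_univ j) h)]
      simp only [if_pos rfl]
      rw [hqq]
      exact (div_lt_one hq0).mpr hlq
    · rw [Finset.sum_eq_single j (fun i _ hij => by simp [hij])
        (fun h => absurd (Finset.mem_univ j) h)]
      simp
  · rintro y1 ⟨c1, h10, h1s, h1G, rfl⟩ y2 ⟨c2, h20, h2s, h2G, rfl⟩ s t hs ht hst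
    refine ⟨fun j => s * c1 j + t * c2 j, ?_, ?_, ?_, (smul_combo_sum r c1 c2 s t)⟩
    · intro j; have := h10 j; have := h20 j; positivity
    · intro j hj; simp only [h1s j hj, h2s j hj]; ring
    · rw [div_combo_sum]
      exact combo_lt_one hs ht hst h1G h2G

lemma mem_hullT (xb : Fin n → ℝ) (r : ι → Fin n → ℝ) (C : Set (Fin n → ℝ))
    (c : ι → ℝ) (hc0 : ∀ j, 0 ≤ c j)
    (hsupp : ∀ j, j ∉ N1set xb r C ∪ N2set xb r C → c j = 0)
    (hH : 1 < ∑ j, c j / (lamM xb (r j) C).toReal)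
    (hG : (∑ j, c j / (lamP xb (r j) C).toReal) < 1) :
    (∑ j, c j • r j) ∈ convexHull ℝ (⋃ j ∈ N1set xb r C ∪ N2set xb r C,
      {y : Fin n → ℝ | ∃ l : ℝ, lamM xb (r j) C < (l : EReal) ∧
        (l : EReal) < lamP xb (r j) C ∧ y = l • r j}) := by
  classical
  set aa : ι → ℝ := fun j => (lamM xb (r j) C).toReal with haadef
  set qq : ι → ℝ := fun j => (lamP xb (r j) C).toReal with hqqdef
  set H : ℝ := ∑ j, c j / aa j with hHdef
  set G : ℝ := ∑ j, c j / qq j with hGdef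
  have hGH : G < H := lt_trans hG hH
  set s : ℝ := (1 - G)/(H - G) with hs
  have hs0 : 0 < s := div_pos (by linarith) (by linarith)
  have hs1 : s < 1 := (div_lt_one (by linarith)).mpr (by linarith)
  set μ : ι → ℝ := fun j => (1 - s) * (c j / qq j) + s * (c j / aa j) with hμ
  have key : ∀ j, c j ≠ 0 → (j ∈ N1set xb r C ∪ N2set xb r C) ∧ 0 < μ j ∧
      lamM xb (r j) C < ((c j / μ j : ℝ) : EReal) ∧
      ((c j / μ j : ℝ) : EReal) < lamP xb (r j) C := by
    intro j hcj
    have hcjpos : 0 < c j := lt_of_le_of_ne (hc0 j) (Ne.symm hcj)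
    have hjE : j ∈ N1set xb r C ∪ N2set xb r C := by
      by_contra h; exact hcj (hsupp j h)
    have hfin : 0 < lamM xb (r j) C ∧ lamM xb (r j) C < ⊤ := by
      rcases hjE with h | h
      exacts [⟨h.1, h.2.1⟩, ⟨h.1, h.2.1⟩]
    obtain ⟨a, ha0, hae⟩ := exists_real_of_lam hfin.1 hfin.2
    have haa : aa j = a := by rw [haadef]; simp only; rw [← hae]; simp
    refine ⟨hjE, ?_⟩
    rcases hjE with hj1 | hj2
    · have hq0 : qq j = 0 := by rw [hqqdef]; simp only; rw [hj1.2.2]; simp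
      have hμj : μ j = s * (c j / a) := by rw [hμ]; simp only; rw [hq0, haa]; simp
      have hμpos : 0 < μ j := by rw [hμj]; positivity
      refine ⟨hμpos, ?_, ?_⟩
      · rw [← hae]
        have h1 : a < c j / μ j := by
          rw [lt_div_iff₀ hμpos, hμj]
          have : a * (s * (c j / a)) = s * c j := by field_simp
          rw [this]
          nlinarith
        exact_mod_cast h1
      · rw [hj1.2.2]
        exact EReal.coe_lt_top _
    · obtain ⟨q, hq0, hqe⟩ := exists_real_of_lam (lt_trans hj2.1 hj2.2.2.1) hj2.2.2.2
      have hqq : qq j = q := by rw [hqqdef]; simp only; rw [← hqe]; simp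
      have haq : a < q := by
        have := hj2.2.2.1
        rw [← hae, ← hqe] at this
        exact_mod_cast this
      set u : ℝ := c j / q with hu
      set v : ℝ := c j / a with hv
      have hu0 : 0 < u := div_pos hcjpos hq0
      have hv0 : 0 < v := div_pos hcjpos ha0
      have huq : u * q = c j := div_mul_cancel₀ _ hq0.ne'
      have hva : v * a = c j := div_mul_cancel₀ _ ha0.ne'
      have hμj : μ j = (1 - s) * u + s * v := by rw [hμ]; simp only; rw [hqq, haa]
      have hμpos : 0 < μ j := by
        rw [hμj]
        have := mul_pos (by linarith : (0:ℝ) < 1 - s) hu0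
        have := mul_pos hs0 hv0
        linarith
      refine ⟨hμpos, ?_, ?_⟩
      · rw [← hae]
        have h1 : a < c j / μ j := by
          rw [lt_div_iff₀ hμpos, hμj]
          have e1 : (1-s)*(a*u) < (1-s)*(q*u) :=
            mul_lt_mul_of_pos_left (mul_lt_mul_of_pos_right haq hu0) (by linarith)
          nlinarith [e1, hva, huq]
        exact_mod_cast h1
      · rw [← hqe]
        have h2 : c j / μ j < q := by
          rw [div_lt_iff₀ hμpos, hμj]
          have e2 : s*(a*v) < s*(q*v) :=
            mul_lt_mul_of_pos_left (mul_lt_mul_of_pos_right haq hv0) hs0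
          nlinarith [e2, hva, huq]
        exact_mod_cast h2
  have hμ0 : ∀ j, c j = 0 → μ j = 0 := by
    intro j h; rw [hμ]; simp only; rw [h]; simp
  have hμnn : ∀ j, 0 ≤ μ j := by
    intro j
    by_cases h : c j = 0
    · rw [hμ0 j h]
    · exact (key j h).2.1.le
  set T : Finset ι := Finset.univ.filter fun j => c j ≠ 0 with hT
  have hcT : ∀ j ∈ T, c j ≠ 0 := by
    intro j hj; exact (Finset.mem_filter.mp hj).2
  have hsumall : (∑ j, μ j) = 1 := by
    have h1 : (∑ j, μ j) = (1-s) * G + s * H := by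
      rw [hμ, hGdef, hHdef]
      simp only
      rw [Finset.sum_add_distrib, ← Finset.mul_sum, ← Finset.mul_sum]
    rw [h1]
    have h2 : s * (H - G) = 1 - G := div_mul_cancel₀ _ (by linarith : H - G ≠ 0)
    linear_combination h2
  have hsum1 : (∑ j ∈ T, μ j) = 1 := by
    rw [← hsumall]
    refine Finset.sum_subset (Finset.subset_univ T) ?_
    intro x _ hx
    have : c x = 0 := by
      by_contra h
      exact hx (Finset.mem_filter.mpr ⟨Finset.mem_univ x, h⟩)
    exact hμ0 x this
  have hz : ∀ i ∈ T, (fun j => (c j / μ j) • r j) i ∈ (⋃ j ∈ N1set xb r C ∪ N2set xb r C,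
      {y : Fin n → ℝ | ∃ l : ℝ, lamM xb (r j) C < (l : EReal) ∧
        (l : EReal) < lamP xb (r j) C ∧ y = l • r j}) := by
    intro i hi
    obtain ⟨hiE, hμpos, hlo, hhi⟩ := key i (hcT i hi)
    exact Set.mem_biUnion hiE ⟨c i / μ i, hlo, hhi, rfl⟩
  have hmem := Finset.centerMass_mem_convexHull T
    (fun i _ => hμnn i) (by rw [hsum1]; norm_num) hz
  have hcm : T.centerMass μ (fun j => (c j / μ j) • r j) = ∑ j, c j • r j := by
    rw [Finset.centerMass_eq_of_sum_1 _ _ hsum1]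
    have h1 : ∀ j ∈ T, μ j • ((c j / μ j) • r j) = c j • r j := by
      intro j hj
      rw [smul_smul]
      congr 1
      rw [mul_div_assoc']
      exact mul_div_cancel_left₀ _ (by
        have := (key j (hcT j hj)).2.1; exact ne_of_gt this)
    rw [Finset.sum_congr rfl h1]
    refine Finset.sum_subset (Finset.subset_univ T) ?_
    intro x _ hx
    have : c x = 0 := by
      by_contra h
      exact hx (Finset.mem_filter.mpr ⟨Finset.mem_univ x, h⟩)
    rw [this, zero_smul]
  rwa [hcm] at hmem

end Aux2


section Aux3
set_option linter.unusedSectionVars false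

lemma sum_add_add_smul (r : ι → Fin n → ℝ) (a b c : ι → ℝ) :
    (∑ j, a j • r j) + ((∑ j, b j • r j) + (∑ j, c j • r j))
      = ∑ j, (a j + b j + c j) • r j := by
  rw [← Finset.sum_add_distrib, ← Finset.sum_add_distrib]
  exact Finset.sum_congr rfl fun j _ => by module

lemma sum_add_smul (r : ι → Fin n → ℝ) (a b : ι → ℝ) :
    (∑ j, a j • r j) + (∑ j, b j • r j) = ∑ j, (a j + b j) • r j := by
  rw [← Finset.sum_add_distrib]
  exact Finset.sum_congr rfl fun j _ => by module

lemma sumdiv_combo (y u v w : ι → ℝ) (θ : ℝ) :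
    (∑ j, (y j - ((1-θ) * u j + θ * v j)) / w j)
      = (1-θ) * (∑ j, (y j - u j)/w j) + θ * (∑ j, (y j - v j)/w j) := by
  rw [Finset.mul_sum, Finset.mul_sum, ← Finset.sum_add_distrib]
  exact Finset.sum_congr rfl fun j _ => by ring

end Aux3

set_option maxHeartbeats 3200000 in
/-- Theorem 5. `T^C = S₀^C ∩ (⋂_{k∈N₂} S_k^C)`, hence
`P^B ∖ T^C = (P^B ∖ S₀^C) ∪ ⋃_{k∈N₂} (P^B ∖ S_k^C)`. -/
theorem stmt12 (xb : Fin n → ℝ) (r : ι → Fin n → ℝ) (hr : LinearIndependent ℝ r)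
    (C : Set (Fin n → ℝ)) (hCopen : IsOpen C) (hCconv : Convex ℝ C)
    (hxb : xb ∉ closure C) (hrecc : recc C ⊆ reccPBset r) :
    TCset xb r C = S0Cset xb r C ∩ ⋂ k ∈ N2set xb r C, SkCset xb r C k ∧
      PBset xb r \ TCset xb r C
        = (PBset xb r \ S0Cset xb r C) ∪ ⋃ k ∈ N2set xb r C, (PBset xb r \ SkCset xb r C k) := by
  classical
  have hKconv : Convex ℝ (recc C) := recc_convex C
  have key : TCset xb r C = S0Cset xb r C ∩ ⋂ k ∈ N2set xb r C, SkCset xb r C k := by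
    apply Set.Subset.antisymm
    · -- forward inclusion
      intro x hx
      rw [TCset, Tset] at hx
      obtain ⟨p, hp, d, hd, hpd⟩ := Set.mem_add.mp hx
      obtain ⟨xb', hxb', h, hh, hph⟩ := Set.mem_add.mp hp
      rw [Set.mem_singleton_iff] at hxb'
      rw [hxb'] at hph
      constructor
      · -- S0C membership
        rw [S0Cset]
        have hsub : h ∈ convexHull ℝ (⋃ j ∈ N1set xb r C ∪ N2set xb r C,
            {y : Fin n → ℝ | ∃ l : ℝ, lamM xb (r j) C < (l : EReal) ∧ y = l • r j}) := by
          refine convexHull_mono ?_ hh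
          refine Set.iUnion₂_mono fun j hj => ?_
          rintro y ⟨l, h1, h2, rfl⟩
          exact ⟨l, h1, rfl⟩
        rw [← hpd, ← hph]
        exact Set.add_mem_add (Set.add_mem_add rfl hsub) hd
      · refine Set.mem_iInter₂.mpr fun k hk => ?_
        have hsplit : h ∈ convexHull ℝ (⋃ j ∈ N2set xb r C,
            {y : Fin n → ℝ | ∃ l : ℝ, 0 ≤ l ∧ (l : EReal) < lamP xb (r j) C ∧ y = l • r j})
            + recc C := by
          refine convexHull_min ?_ (Convex.add (convex_convexHull ℝ _) hKconv) hh
          rintro y hy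
          rw [Set.mem_iUnion₂] at hy
          obtain ⟨j, hj, l, h1, h2, rfl⟩ := hy
          rcases hj with hj1 | hj2
          · have hl0 : (0:ℝ) < l := by
              have h3 : ((0:ℝ):EReal) < (l:EReal) := by
                rw [EReal.coe_zero]; exact lt_trans hj1.1 h1
              exact_mod_cast h3
            refine Set.mem_add.mpr ⟨0, ?_,
              l • r j, recc_smul_mem (N1_mem_recc hCopen hCconv hj1) hl0.le, zero_add _⟩
            refine subset_convexHull ℝ _ ?_
            refine Set.mem_biUnion hk ⟨0, le_refl 0, ?_, (zero_smul ℝ _).symm⟩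
            rw [EReal.coe_zero]
            exact lt_trans hk.1 hk.2.2.1
          · refine Set.mem_add.mpr ⟨l • r j, ?_, 0, recc_zero_mem C, add_zero _⟩
            refine subset_convexHull ℝ _ ?_
            have hl0 : (0:ℝ) ≤ l := by
              have h3 : ((0:ℝ):EReal) < (l:EReal) := by
                rw [EReal.coe_zero]; exact lt_trans hj2.1 h1
              have : (0:ℝ) < l := by exact_mod_cast h3
              linarith
            exact Set.mem_biUnion hj2 ⟨l, hl0, h2, rfl⟩
        obtain ⟨h2, hh2, d2, hd2, hhd2⟩ := Set.mem_add.mp hsplit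
        rw [SkCset]
        have hxeq : x = (((xb + h2) + 0) + (d2 + d)) := by
          rw [← hpd, ← hph, ← hhd2]; abel
        rw [hxeq]
        exact Set.add_mem_add (Set.add_mem_add (Set.add_mem_add rfl hh2)
          ⟨0, le_refl 0, (zero_smul ℝ _).symm⟩) (recc_add_mem hd2 hd)
    · -- reverse inclusion
      rintro x ⟨hx0, hxk⟩
      rw [S0Cset] at hx0
      obtain ⟨p, hp, d, hd, hpd⟩ := Set.mem_add.mp hx0
      obtain ⟨xb', hxb', h, hh, hph⟩ := Set.mem_add.mp hp
      rw [Set.mem_singleton_iff] at hxb'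
      rw [hxb'] at hph
      obtain ⟨c0, hc00, hc0supp, hc0H, hc0eq⟩ := hull0_subset xb r C hh
      obtain ⟨t0, ht00, ht0eq⟩ := hrecc hd
      set aa : ι → ℝ := fun j => (lamM xb (r j) C).toReal with haadef
      set qq : ι → ℝ := fun j => (lamP xb (r j) C).toReal with hqqdef
      set y : ι → ℝ := fun j => c0 j + t0 j with hydef
      have hyj : ∀ j, y j = c0 j + t0 j := fun j => rfl
      have hxy : x = xb + ∑ j, y j • r j := by
        rw [← hpd, ← hph, hc0eq, ht0eq, add_assoc]
        congr 1
        rw [sum_add_smul]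
      -- standing facts
      have hN2fact : ∀ j ∈ N2set xb r C, 0 < aa j ∧ aa j < qq j ∧
          ((aa j : EReal) = lamM xb (r j) C) ∧ ((qq j : EReal) = lamP xb (r j) C) := by
        intro j hj
        obtain ⟨a, ha0, hae⟩ := exists_real_of_lam hj.1 hj.2.1
        obtain ⟨q, hq0, hqe⟩ := exists_real_of_lam (lt_trans hj.1 hj.2.2.1) hj.2.2.2
        have h1 : aa j = a := by rw [haadef]; simp only; rw [← hae]; simp
        have h2 : qq j = q := by rw [hqqdef]; simp only; rw [← hqe]; simp
        have haq : a < q := by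
          have h3 := hj.2.2.1
          rw [← hae, ← hqe] at h3
          exact_mod_cast h3
        exact ⟨h1 ▸ ha0, by rw [h1, h2]; exact haq, by rw [h1]; exact hae,
          by rw [h2]; exact hqe⟩
      have hN1fact : ∀ j ∈ N1set xb r C, 0 < aa j ∧ qq j = 0 := by
        intro j hj
        obtain ⟨a, ha0, hae⟩ := exists_real_of_lam hj.1 hj.2.1
        have h1 : aa j = a := by rw [haadef]; simp only; rw [← hae]; simp
        exact ⟨h1 ▸ ha0, by rw [hqqdef]; simp only; rw [hj.2.2]; simp⟩
      set Hf : (ι → ℝ) → ℝ := fun t => ∑ j, (y j - t j)/aa j with hHfdef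
      set Gf : (ι → ℝ) → ℝ := fun t => ∑ j, (y j - t j)/qq j with hGfdef
      set D : Set (ι → ℝ) := {t | (∑ j, t j • r j) ∈ recc C ∧ (∀ j, 0 ≤ t j ∧ t j ≤ y j)
        ∧ (∀ j, j ∉ N1set xb r C ∪ N2set xb r C → t j = y j) ∧ 1 ≤ Hf t} with hDdef
      -- comparison of Hf and Gf on D
      have hcomp : ∀ t ∈ D, ∀ j : ι, (y j - t j)/qq j ≤ (y j - t j)/aa j := by
        intro t ht j
        by_cases hj : j ∈ N1set xb r C ∪ N2set xb r C
        · rcases hj with h1 | h2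
          · obtain ⟨ha, hq⟩ := hN1fact j h1
            rw [hq, div_zero]
            exact div_nonneg (by linarith [(ht.2.1 j).2]) ha.le
          · obtain ⟨ha, haq, -, -⟩ := hN2fact j h2
            have hnum : 0 ≤ y j - t j := by linarith [(ht.2.1 j).2]
            rcases eq_or_lt_of_le hnum with h3 | h3
            · rw [← h3, zero_div, zero_div]
            · exact le_of_lt (div_lt_div_of_pos_left h3 ha haq)
        · rw [ht.2.2.1 j hj]
          simp
      have hstrict : ∀ t ∈ D, ∀ k ∈ N2set xb r C, 0 < y k - t k → Gf t < Hf t := by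
        intro t ht k hk hpos
        refine Finset.sum_lt_sum (fun j _ => hcomp t ht j) ⟨k, Finset.mem_univ k, ?_⟩
        obtain ⟨ha, haq, -, -⟩ := hN2fact k hk
        exact div_lt_div_of_pos_left hpos ha haq
      -- topological structure
      have hHcont : Continuous Hf := by
        refine continuous_finset_sum _ fun j _ => ?_
        exact (continuous_const.sub (continuous_apply j)).div_const _
      have hGcont : Continuous Gf := by
        refine continuous_finset_sum _ fun j _ => ?_
        exact (continuous_const.sub (continuous_apply j)).div_const _
      have hΦcont : Continuous fun t : ι → ℝ => ∑ j, t j • r j :=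
        continuous_finset_sum _ fun j _ => (continuous_apply j).smul continuous_const
      have hDclosed : IsClosed D := by
        have hDeq : D = ((fun t : ι → ℝ => ∑ j, t j • r j) ⁻¹' recc C)
            ∩ ((⋂ j : ι, {t : ι → ℝ | 0 ≤ t j ∧ t j ≤ y j})
            ∩ ((⋂ j : ι, {t : ι → ℝ | j ∉ N1set xb r C ∪ N2set xb r C → t j = y j})
            ∩ {t | 1 ≤ Hf t})) := by
          ext t
          simp only [hDdef, Set.mem_setOf_eq, Set.mem_inter_iff, Set.mem_preimage,
            Set.mem_iInter] <;> tauto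
        rw [hDeq]
        refine IsClosed.inter ((recc_isClosed hCopen hCconv).preimage hΦcont) ?_
        refine IsClosed.inter (isClosed_iInter fun j => ?_) ?_
        · exact IsClosed.inter (isClosed_le continuous_const (continuous_apply j))
            (isClosed_le (continuous_apply j) continuous_const)
        refine IsClosed.inter (isClosed_iInter fun j => ?_)
          (isClosed_le continuous_const hHcont)
        by_cases hj : j ∈ N1set xb r C ∪ N2set xb r C
        · have huniv : {t : ι → ℝ | j ∉ N1set xb r C ∪ N2set xb r C → t j = y j}
              = Set.univ := by
            ext t; simp [hj]
          rw [huniv]; exact isClosed_univ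
        · simp only [hj, not_false_eq_true, true_implies]
          exact isClosed_eq (continuous_apply j) continuous_const
      have hDcpt : IsCompact D := by
        refine IsCompact.of_isClosed_subset (isCompact_Icc : IsCompact (Set.Icc (0 : ι → ℝ) y)) hDclosed ?_
        intro t ht
        rw [Set.mem_Icc]
        constructor
        · intro j; exact (ht.2.1 j).1
        · intro j; exact (ht.2.1 j).2
      have hyt0 : ∀ j, y j - t0 j = c0 j := fun j => by rw [hyj j]; ring
      have hHft0 : Hf t0 = ∑ j, c0 j / aa j := by
        rw [hHfdef]
        exact Finset.sum_congr rfl fun j _ => by rw [hyt0 j]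
      have hD0mem : t0 ∈ D := by
        refine ⟨by rw [← ht0eq]; exact hd, fun j => ⟨ht00 j, by rw [hyj j]; linarith [hc00 j]⟩,
          fun j hj => by rw [hyj j, hc0supp j hj, zero_add], ?_⟩
        rw [hHft0]
        exact le_of_lt hc0H
      obtain ⟨tm, htmD, htmin⟩ := hDcpt.exists_isMinOn ⟨t0, hD0mem⟩ hGcont.continuousOn
      -- the minimum has Gf < 1
      have hGlt : Gf tm < 1 := by
        by_contra hge
        push_neg at hge
        have hky : ∃ k, 0 < (y k - tm k)/qq k := by
          by_contra hno
          push_neg at hno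
          have h4 : Gf tm ≤ 0 := Finset.sum_nonpos fun j _ => hno j
          linarith
        obtain ⟨k, hkpos⟩ := hky
        have hnum0 : 0 ≤ y k - tm k := by linarith [(htmD.2.1 k).2]
        have hqqkpos : 0 < qq k := by
          rcases lt_trichotomy (qq k) 0 with h4 | h4 | h4
          · have := div_nonpos_of_nonneg_of_nonpos hnum0 h4.le
            linarith
          · rw [h4, div_zero] at hkpos; linarith
          · exact h4
        have hckk : 0 < y k - tm k := by
          rcases eq_or_lt_of_le hnum0 with h4 | h4
          · rw [← h4, zero_div] at hkpos; linarith
          · exact h4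
        have hktop : lamP xb (r k) C ≠ ⊤ := by
          intro h4
          rw [hqqdef] at hqqkpos
          simp only at hqqkpos
          rw [h4] at hqqkpos
          simp at hqqkpos
        have hkne : ∃ l : ℝ, 0 ≤ l ∧ xb + l • r k ∈ C := by
          by_contra hemp
          push_neg at hemp
          have h5 : {l : ℝ | 0 ≤ l ∧ xb + l • r k ∈ C} = ∅ := by
            ext l; simp only [Set.mem_setOf_eq, Set.mem_empty_iff_false, iff_false, not_and]
            exact fun h6 => hemp l h6
          have h6 : lamP xb (r k) C = ⊥ := by
            rw [lamP, h5, Set.image_empty, sSup_empty]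
          rw [hqqdef] at hqqkpos
          simp only at hqqkpos
          rw [h6] at hqqkpos
          simp at hqqkpos
        have hkN2 := mem_N2_of hCopen hxb hkne hktop
        -- get the S_k decomposition
        have hxkk := Set.mem_iInter₂.mp hxk k hkN2
        rw [SkCset] at hxkk
        obtain ⟨u3, hu3, e, he, hu3e⟩ := Set.mem_add.mp hxkk
        obtain ⟨u2, hu2, w, hw, hu2w⟩ := Set.mem_add.mp hu3
        obtain ⟨xb', hxb', h', hh', hxh'⟩ := Set.mem_add.mp hu2
        rw [Set.mem_singleton_iff] at hxb'
        rw [hxb'] at hxh'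
        obtain ⟨ck, hck0, hcksupp, hckG, hckeq⟩ := hullk_subset xb r C hh'
        obtain ⟨lam, hlam, hweq⟩ := hw
        obtain ⟨tk, htk0, htkeq⟩ := hrecc he
        -- coordinate identity: y = ck + lam·δₖ + tk
        have hyck : ∀ j, y j = ck j + (if j = k then lam else 0) + tk j := by
          have e1 : xb + ∑ j, y j • r j
              = xb + ∑ j, (ck j + (if j = k then lam else 0) + tk j) • r j := by
            rw [← hxy, ← hu3e, ← hu2w, ← hxh', hckeq, htkeq, hweq]
            have hδ : (lam • r k : Fin n → ℝ) = ∑ j, (if j = k then lam else 0) • r j := by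
              rw [Finset.sum_eq_single k (fun i _ hij => by simp [hij])
                (fun h4 => absurd (Finset.mem_univ k) h4)]
              simp
            rw [hδ, ← sum_add_add_smul r ck _ tk]
            abel
          have e2 := add_left_cancel e1
          have e3 := sum_smul_inj hr e2
          exact fun j => congrFun e3 j
        have hGftk : Gf tk < 1 := by
          have e4 : Gf tk = (∑ j, ck j / qq j) + lam / qq k := by
            rw [hGfdef]
            simp only
            have e5 : ∀ j, (y j - tk j) / qq j
                = ck j / qq j + (if j = k then lam else 0) / qq j := by
              intro j
              rw [hyck j, show ck j + (if j = k then lam else 0) + tk j - tk j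
                = ck j + (if j = k then lam else 0) from by ring, add_div]
            rw [Finset.sum_congr rfl fun j _ => e5 j, Finset.sum_add_distrib]
            congr 1
            rw [Finset.sum_eq_single k (fun i _ hij => by simp [hij])
              (fun h4 => absurd (Finset.mem_univ k) h4)]
            simp
          rw [e4]
          have e6 : lam / qq k ≤ 0 := div_nonpos_of_nonpos_of_nonneg hlam hqqkpos.le
          linarith
        -- Hf tm is strictly above 1
        have hHm : Gf tm < Hf tm := hstrict tm htmD k hkN2 hckk
        set γ : ℝ := Hf tm - 1 with hγdef
        have hγpos : 0 < γ := by simp only [hγdef]; linarith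
        set Δ : ℝ := |Hf tm - Hf tk| with hΔdef
        have hΔ0 : 0 ≤ Δ := abs_nonneg _
        set ckk : ℝ := y k - tm k with hckkdef
        set m : ℝ := max 0 (-(y k - tk k)) with hmdef
        have hm0 : 0 ≤ m := le_max_left _ _
        set θ : ℝ := min (ckk/(2*(ckk+m))) (γ/(γ + Δ + 1)) with hθdef
        have hθpos : 0 < θ := lt_min (by positivity) (by positivity)
        have hθA : θ ≤ ckk/(2*(ckk+m)) := min_le_left _ _
        have hθB : θ ≤ γ/(γ + Δ + 1) := min_le_right _ _
        have hθhalf : θ ≤ 1/2 := by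
          refine le_trans hθA ?_
          rw [div_le_div_iff₀ (by positivity) (by norm_num)]
          nlinarith
        have hθ1 : θ < 1 := by linarith
        have h1θ : 0 ≤ 1 - θ := by linarith
        set tθ : ι → ℝ := fun j => (1-θ)*tm j + θ*tk j with htθdef
        have htθD : tθ ∈ D := by
          refine ⟨?_, ?_, ?_, ?_⟩
          · have e7 : (∑ j, tθ j • r j)
                = (1-θ) • (∑ j, tm j • r j) + θ • (∑ j, tk j • r j) :=
              (smul_combo_sum r tm tk (1-θ) θ).symm
            rw [e7]
            exact hKconv htmD.1 (by rw [← htkeq]; exact he) h1θ hθpos.le (by ring)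
          · intro j
            constructor
            · exact add_nonneg (mul_nonneg h1θ (htmD.2.1 j).1) (mul_nonneg hθpos.le (htk0 j))
            · by_cases hjk : j = k
              · subst hjk
                have e8 : θ * (ckk + m) ≤ ckk/2 := by
                  calc θ * (ckk + m) ≤ (ckk/(2*(ckk+m))) * (ckk+m) :=
                        mul_le_mul_of_nonneg_right hθA (by positivity)
                  _ = ckk/2 := by field_simp
                have e9 : -(y j - tk j) ≤ m := le_max_right _ _
                simp only [htθdef]
                nlinarith
              · have e10 : tm j ≤ y j := (htmD.2.1 j).2
                have e11 : tk j ≤ y j := by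
                  have e12 := hyck j
                  rw [if_neg hjk, add_zero] at e12
                  have := hck0 j
                  linarith
                simp only [htθdef]
                nlinarith [mul_le_mul_of_nonneg_left e10 h1θ,
                  mul_le_mul_of_nonneg_left e11 hθpos.le]
          · intro j hj
            have e13 : tm j = y j := htmD.2.2.1 j hj
            have e14 : tk j = y j := by
              have e15 := hyck j
              rw [if_neg (fun h4 : j = k => hj (h4 ▸ (Set.mem_union_right _ hkN2))),
                add_zero, hcksupp j (fun h5 => hj (Set.mem_union_right _ h5)), zero_add] at e15
              exact e15.symm
            simp only [htθdef]
            rw [e13, e14]; ring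
          · have e16 : Hf tθ = (1-θ)*Hf tm + θ*Hf tk := by
              rw [hHfdef]; simp only [htθdef]
              exact sumdiv_combo y tm tk aa θ
            have e17 : θ * Δ ≤ γ := by
              calc θ * Δ ≤ (γ/(γ+Δ+1)) * Δ := mul_le_mul_of_nonneg_right hθB hΔ0
              _ ≤ γ := by
                  rw [div_mul_eq_mul_div, div_le_iff₀ (by positivity)]
                  nlinarith
            have e18 : Hf tm - Hf tk ≤ Δ := le_abs_self _
            have e19 : θ * (Hf tm - Hf tk) ≤ θ * Δ := mul_le_mul_of_nonneg_left e18 hθpos.le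
            rw [e16]
            nlinarith
        have hGθ : Gf tθ < Gf tm := by
          have e20 : Gf tθ = (1-θ)*Gf tm + θ*Gf tk := by
            rw [hGfdef]; simp only [htθdef]
            exact sumdiv_combo y tm tk qq θ
          rw [e20]
          nlinarith
        exact absurd (isMinOn_iff.mp htmin tθ htθD) (not_le.mpr hGθ)
      -- final mixing with t0 for strictness of Hf
      set δ1 : ℝ := 1 - Gf tm with hδ1def
      have hδ1pos : 0 < δ1 := by simp only [hδ1def]; linarith
      set Δ0 : ℝ := |Gf t0 - Gf tm| with hΔ0def
      have hΔ00 : 0 ≤ Δ0 := abs_nonneg _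
      set s0 : ℝ := δ1/(δ1 + Δ0 + 1) with hs0def
      have hs00 : 0 < s0 := by positivity
      have hs01 : s0 < 1 := by
        rw [hs0def, div_lt_one (by positivity)]
        linarith
      set ts : ι → ℝ := fun j => (1-s0)*tm j + s0*t0 j with htsdef
      have hts_recc : (∑ j, ts j • r j) ∈ recc C := by
        have e21 : (∑ j, ts j • r j)
            = (1-s0) • (∑ j, tm j • r j) + s0 • (∑ j, t0 j • r j) :=
          (smul_combo_sum r tm t0 (1-s0) s0).symm
        rw [e21]
        exact hKconv htmD.1 (by rw [← ht0eq]; exact hd) (by linarith) hs00.le (by ring)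
      have hts_box : ∀ j, 0 ≤ ts j ∧ ts j ≤ y j := by
        intro j
        constructor
        · exact add_nonneg (mul_nonneg (by linarith) (htmD.2.1 j).1)
            (mul_nonneg hs00.le (hD0mem.2.1 j).1)
        · have e22 := (htmD.2.1 j).2
          have e23 := (hD0mem.2.1 j).2
          simp only [htsdef]
          nlinarith [mul_le_mul_of_nonneg_left e22 (by linarith : (0:ℝ) ≤ 1 - s0),
            mul_le_mul_of_nonneg_left e23 hs00.le]
      have hts_supp : ∀ j, j ∉ N1set xb r C ∪ N2set xb r C → y j - ts j = 0 := by
        intro j hj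
        have e24 : tm j = y j := htmD.2.2.1 j hj
        have e25 : t0 j = y j := hD0mem.2.2.1 j hj
        simp only [htsdef]
        rw [e24, e25]; ring
      have hHts : 1 < Hf ts := by
        have e26 : Hf ts = (1-s0)*Hf tm + s0*Hf t0 := by
          rw [hHfdef]; simp only [htsdef]
          exact sumdiv_combo y tm t0 aa s0
        have e27 : 1 ≤ Hf tm := htmD.2.2.2
        have e28 : 1 < Hf t0 := by rw [hHft0]; exact hc0H
        rw [e26]
        nlinarith
      have hGts : Gf ts < 1 := by
        have e29 : Gf ts = (1-s0)*Gf tm + s0*Gf t0 := by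
          rw [hGfdef]; simp only [htsdef]
          exact sumdiv_combo y tm t0 qq s0
        have e30 : s0 * Δ0 < δ1 := by
          rw [hs0def, div_mul_eq_mul_div, div_lt_iff₀ (by positivity)]
          nlinarith
        have e31 : Gf t0 - Gf tm ≤ Δ0 := le_abs_self _
        have e32 : s0 * (Gf t0 - Gf tm) ≤ s0 * Δ0 := mul_le_mul_of_nonneg_left e31 hs00.le
        rw [e29]
        nlinarith
      -- conclude membership in T^C
      have hmemT := mem_hullT xb r C (fun j => y j - ts j)
        (fun j => sub_nonneg.mpr (hts_box j).2) hts_supp hHts hGts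
      rw [TCset, Tset]
      have hxfin : x = (xb + ∑ j, (y j - ts j) • r j) + ∑ j, ts j • r j := by
        rw [hxy, add_assoc]
        congr 1
        rw [sum_add_smul]
        exact Finset.sum_congr rfl fun j _ => by ring_nf
      rw [hxfin]
      exact Set.add_mem_add (Set.add_mem_add rfl hmemT) hts_recc
  refine ⟨key, ?_⟩
  rw [key]
  ext z
  simp only [Set.mem_diff, Set.mem_inter_iff, Set.mem_iInter, Set.mem_union, Set.mem_iUnion]
  constructor
  · rintro ⟨hz, hnot⟩
    by_cases h0 : z ∈ S0Cset xb r C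
    · have : ¬ ∀ k, ∀ _ : k ∈ N2set xb r C, z ∈ SkCset xb r C k := fun h => hnot ⟨h0, h⟩
      push_neg at this
      obtain ⟨k, hk, hzk⟩ := this
      exact Or.inr ⟨k, hk, hz, hzk⟩
    · exact Or.inl ⟨hz, h0⟩
  · rintro (⟨hz, h0⟩ | ⟨k, hk, hz, hzk⟩)
    · exact ⟨hz, fun h => h0 h.1⟩
    · exact ⟨hz, fun h => hzk (h.2 k hk)⟩
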